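/- Let G be a group, t ∈ G with t² = e, θ the inner automorphism g ↦ t g t⁻¹, and H = G^θ = Z_G(t) the centralizer of t. Let X be a maximal antipodal set in G/H containing the origin o = eH, and set F(X) = ⟨{g t g⁻¹ : gH ∈ X}⟩ ≤ G (well defined since elements of H commute with t; note t ∈ F(X)). Then F(X) is a maximal element, under inclusion, of the set of elementary abelian 2-subgroups of G that contain t and are generated by conjugates of t, and X = {gH ∈ G/H : g t g⁻¹ ∈ F(X)}. (This is the inner-automorphism case of the paper's theorem on adjoint-type symmetric spaces.) -/
import Mathlib


/-- `X ⊆ G ⧸ H` is antipodal if `φ(g₂⁻¹g₁) ∈ H` for all cosets `g₁H, g₂H ∈ X`,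
where `φ(g) = g·θ(g)⁻¹` is the Cartan quadratic map. -/
def IsAntipodal {G : Type*} [Group G] (θ : G → G) (H : Subgroup G) (X : Set (G ⧸ H)) : Prop :=
  ∀ g₁ g₂ : G, (QuotientGroup.mk g₁ : G ⧸ H) ∈ X → (QuotientGroup.mk g₂ : G ⧸ H) ∈ X →
    (g₂⁻¹ * g₁) * (θ (g₂⁻¹ * g₁))⁻¹ ∈ H

/-- `X` is a maximal antipodal set if it is antipodal and not properly contained in
any other antipodal subset of `G ⧸ H`. -/
def MaximalAntipodal {G : Type*} [Group G] (θ : G → G) (H : Subgroup G) (X : Set (G ⧸ H)) : Prop :=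
  IsAntipodal θ H X ∧ ∀ Y : Set (G ⧸ H), IsAntipodal θ H Y → X ⊆ Y → Y = X

/-- The antipodal condition on representatives is equivalent to commutation of the
corresponding conjugates of `t`. -/
private lemma antipodal_iff_commute {G : Type*} [Group G] (t g₁ g₂ : G) :
    (g₂⁻¹ * g₁) * (t * (g₂⁻¹ * g₁) * t⁻¹)⁻¹ ∈ Subgroup.centralizer {t} ↔
      Commute (g₁ * t * g₁⁻¹) (g₂ * t * g₂⁻¹) := by
  have hx : (g₂⁻¹ * g₁) * (t * (g₂⁻¹ * g₁) * t⁻¹)⁻¹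
      = ((g₂⁻¹ * g₁) * t * (g₂⁻¹ * g₁)⁻¹) * t⁻¹ := by group
  have e : g₂ * ((g₂⁻¹ * g₁) * t * (g₂⁻¹ * g₁)⁻¹) * g₂⁻¹ = g₁ * t * g₁⁻¹ := by group
  rw [Subgroup.mem_centralizer_iff]
  simp only [Set.mem_singleton_iff, forall_eq]
  constructor
  · intro h
    have h' : Commute t ((g₂⁻¹ * g₁) * (t * (g₂⁻¹ * g₁) * t⁻¹)⁻¹) := h
    rw [hx] at h'
    have h'' := h'.mul_right (Commute.refl t)
    rw [inv_mul_cancel_right] at h''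
    have h2 := (Commute.conj_iff g₂).mpr h''
    rw [e] at h2
    exact h2.symm
  · intro h
    have h2 : Commute (g₂ * t * g₂⁻¹)
        (g₂ * ((g₂⁻¹ * g₁) * t * (g₂⁻¹ * g₁)⁻¹) * g₂⁻¹) := by rw [e]; exact h.symm
    have h'' := (Commute.conj_iff g₂).mp h2
    have h' := h''.mul_right (Commute.refl t).inv_right
    rw [← hx] at h'
    exact h'

theorem stmt_6 {G : Type*} [Group G] (t : G) (ht : t ^ 2 = 1)
    (H : Subgroup G) (hH : H = Subgroup.centralizer {t})
    (X : Set (G ⧸ H)) (hX : (QuotientGroup.mk (1 : G) : G ⧸ H) ∈ X)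
    (hmax : MaximalAntipodal (fun g => t * g * t⁻¹) H X)
    (F : Subgroup G)
    (hF : F = Subgroup.closure
      {y : G | ∃ g : G, (QuotientGroup.mk g : G ⧸ H) ∈ X ∧ y = g * t * g⁻¹}) :
    ((∀ a ∈ F, a ^ 2 = 1) ∧ t ∈ F ∧
        (∃ S ⊆ {y : G | ∃ g : G, y = g * t * g⁻¹}, Subgroup.closure S = F) ∧
        ∀ F' : Subgroup G,
          ((∀ a ∈ F', a ^ 2 = 1) ∧ t ∈ F' ∧
            ∃ S ⊆ {y : G | ∃ g : G, y = g * t * g⁻¹}, Subgroup.closure S = F') →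
          F ≤ F' → F' = F) ∧
      X = {x : G ⧸ H | ∃ g : G, (QuotientGroup.mk g : G ⧸ H) = x ∧ g * t * g⁻¹ ∈ F} := by
  subst hH
  subst hF
  have htt : t * t = 1 := by rw [← sq]; exact ht
  set S : Set G :=
    {y : G | ∃ g : G, (QuotientGroup.mk g : G ⧸ Subgroup.centralizer {t}) ∈ X ∧
      y = g * t * g⁻¹} with hSdef
  -- well-definedness of g ↦ g t g⁻¹ on cosets
  have key : ∀ g₁ g₂ : G,
      (QuotientGroup.mk g₁ : G ⧸ Subgroup.centralizer {t}) = QuotientGroup.mk g₂ →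
      g₁ * t * g₁⁻¹ = g₂ * t * g₂⁻¹ := by
    intro g₁ g₂ h
    have hm : g₁⁻¹ * g₂ ∈ Subgroup.centralizer {t} := QuotientGroup.eq.mp h
    have hcomm : t * (g₁⁻¹ * g₂) = (g₁⁻¹ * g₂) * t :=
      Subgroup.mem_centralizer_iff.mp hm t rfl
    calc g₁ * t * g₁⁻¹ = g₁ * (t * (g₁⁻¹ * g₂)) * g₂⁻¹ := by group
      _ = g₁ * ((g₁⁻¹ * g₂) * t) * g₂⁻¹ := by rw [hcomm]
      _ = g₂ * t * g₂⁻¹ := by group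
  have hStS : t ∈ S := ⟨1, hX, by group⟩
  have hSsq : ∀ a ∈ S, a * a = 1 := by
    rintro a ⟨g, -, rfl⟩
    calc (g * t * g⁻¹) * (g * t * g⁻¹) = g * (t * t) * g⁻¹ := by group
      _ = 1 := by rw [htt]; group
  have hScomm : ∀ a ∈ S, ∀ b ∈ S, a * b = b * a := by
    rintro a ⟨g₁, hg₁, rfl⟩ b ⟨g₂, hg₂, rfl⟩
    exact (antipodal_iff_commute t g₁ g₂).mp (hmax.1 g₁ g₂ hg₁ hg₂)
  have hFle : Subgroup.closure S ≤ Subgroup.centralizer S := by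
    rw [Subgroup.closure_le]
    intro x hx
    exact Subgroup.mem_centralizer_iff.mpr fun b hb => hScomm b hb x hx
  have hFcomm : ∀ a ∈ Subgroup.closure S, ∀ b ∈ Subgroup.closure S, a * b = b * a := by
    intro a ha b hb
    have h1 : ∀ s ∈ S, s * a = a * s := Subgroup.mem_centralizer_iff.mp (hFle ha)
    have h2 : Subgroup.closure S ≤ Subgroup.centralizer {a} := by
      rw [Subgroup.closure_le]
      intro s hs
      refine Subgroup.mem_centralizer_iff.mpr ?_
      rintro y rfl
      exact (h1 s hs).symm
    exact Subgroup.mem_centralizer_iff.mp (h2 hb) a rfl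
  have hFsq : ∀ a ∈ Subgroup.closure S, a ^ 2 = 1 := by
    intro a ha
    refine Subgroup.closure_induction (p := fun x _ => x ^ 2 = 1)
      (fun x hx => by show x ^ 2 = 1; rw [sq]; exact hSsq x hx) (by simp)
      (fun x y hx hy ihx ihy => ?_)
      (fun x hx ihx => by show x⁻¹ ^ 2 = 1; rw [inv_pow, ihx, inv_one]) ha
    show (x * y) ^ 2 = 1
    have hcomm : Commute x y := hFcomm x hx y hy
    rw [hcomm.mul_pow, ihx, ihy, one_mul]
  -- the set Y(F') is antipodal for any elementary abelian F'
  have hY : ∀ F' : Subgroup G, (∀ a ∈ F', a ^ 2 = 1) →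
      IsAntipodal (fun g => t * g * t⁻¹) (Subgroup.centralizer {t})
        {x : G ⧸ Subgroup.centralizer {t} |
          ∃ g : G, (QuotientGroup.mk g : G ⧸ Subgroup.centralizer {t}) = x ∧
            g * t * g⁻¹ ∈ F'} := by
    intro F' hF2 g₁ g₂ h₁ h₂
    obtain ⟨g₁', e₁, m₁⟩ := h₁
    obtain ⟨g₂', e₂, m₂⟩ := h₂
    have m₁' : g₁ * t * g₁⁻¹ ∈ F' := by rw [key g₁ g₁' e₁.symm]; exact m₁
    have m₂' : g₂ * t * g₂⁻¹ ∈ F' := by rw [key g₂ g₂' e₂.symm]; exact m₂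
    have hab : (g₁ * t * g₁⁻¹) * (g₂ * t * g₂⁻¹) = (g₂ * t * g₂⁻¹) * (g₁ * t * g₁⁻¹) := by
      set a := g₁ * t * g₁⁻¹
      set b := g₂ * t * g₂⁻¹
      have ha : a * a = 1 := by rw [← sq]; exact hF2 a m₁'
      have hb : b * b = 1 := by rw [← sq]; exact hF2 b m₂'
      have hab2 : (a * b) * (a * b) = 1 := by rw [← sq]; exact hF2 _ (mul_mem m₁' m₂')
      have hai : a⁻¹ = a := inv_eq_of_mul_eq_one_right ha
      have hbi : b⁻¹ = b := inv_eq_of_mul_eq_one_right hb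
      have habi : (a * b)⁻¹ = a * b := inv_eq_of_mul_eq_one_right hab2
      calc a * b = (a * b)⁻¹ := habi.symm
        _ = b⁻¹ * a⁻¹ := mul_inv_rev a b
        _ = b * a := by rw [hai, hbi]
    exact (antipodal_iff_commute t g₁ g₂).mpr hab
  -- for any elementary abelian F' containing F, the set Y(F') equals X
  have hXY : ∀ F' : Subgroup G, (∀ a ∈ F', a ^ 2 = 1) → Subgroup.closure S ≤ F' →
      {x : G ⧸ Subgroup.centralizer {t} |
        ∃ g : G, (QuotientGroup.mk g : G ⧸ Subgroup.centralizer {t}) = x ∧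
          g * t * g⁻¹ ∈ F'} = X := by
    intro F' h2 hle
    apply hmax.2 _ (hY F' h2)
    intro x hx
    obtain ⟨g, rfl⟩ := QuotientGroup.mk_surjective x
    exact ⟨g, rfl, hle (Subgroup.subset_closure ⟨g, hx, rfl⟩)⟩
  refine ⟨⟨hFsq, Subgroup.subset_closure hStS, ⟨S, ?_, rfl⟩, ?_⟩, ?_⟩
  · rintro y ⟨g, -, e⟩
    exact ⟨g, e⟩
  · rintro F' ⟨h2, htF', S', hS'sub, hS'cl⟩ hle
    have hYX := hXY F' h2 hle
    refine le_antisymm ?_ hle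
    rw [← hS'cl, Subgroup.closure_le]
    intro s hs
    obtain ⟨g, rfl⟩ := hS'sub hs
    have hgX : (QuotientGroup.mk g : G ⧸ Subgroup.centralizer {t}) ∈ X := by
      rw [← hYX]
      exact ⟨g, rfl, by rw [← hS'cl]; exact Subgroup.subset_closure hs⟩
    exact Subgroup.subset_closure ⟨g, hgX, rfl⟩
  · exact (hXY (Subgroup.closure S) hFsq le_rfl).symm
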